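/- For every positive integer k, there exist a k-regular graph G and a tournament T on the same (finite) vertex set such that for every vertex v the subgraph of G induced on the out-neighbourhood N⁺_T(v) is a forest (contains no cycle). -/

import Mathlib

open scoped Classical

set_option linter.unusedTactic false
set_option linter.unreachableTactic false
set_option linter.unnecessarySeqFocus false

namespace MyProof

variable {V : Type*} {G : SimpleGraph V} {s : Set V}

def wres : ∀ {x y : V} (p : G.Walk x y) (h : ∀ z ∈ p.support, z ∈ s),
    (G.induce s).Walk ⟨x, h x p.start_mem_support⟩ ⟨y, h y p.end_mem_support⟩
  | _, _, SimpleGraph.Walk.nil, _ => SimpleGraph.Walk.nil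
  | x, y, SimpleGraph.Walk.cons (v := m) ha p, h =>
      SimpleGraph.Walk.cons
        (u := ⟨x, h x (SimpleGraph.Walk.start_mem_support _)⟩)
        (v := ⟨m, h m (by simp)⟩)
        (by simpa using ha)
        ((wres p (fun z hz => h z (by simp [hz]))).copy (Subtype.ext rfl) rfl)

@[simp] lemma wres_support : ∀ {x y : V} (p : G.Walk x y) (h : ∀ z ∈ p.support, z ∈ s),
    (wres p h).support.map Subtype.val = p.support
  | _, _, SimpleGraph.Walk.nil, _ => by simp [wres]
  | x, y, SimpleGraph.Walk.cons ha p, h => by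
      simp [wres, wres_support p]

@[simp] lemma wres_edges : ∀ {x y : V} (p : G.Walk x y) (h : ∀ z ∈ p.support, z ∈ s),
    (wres p h).edges.map (Sym2.map Subtype.val) = p.edges
  | _, _, SimpleGraph.Walk.nil, _ => by simp [wres]
  | x, y, SimpleGraph.Walk.cons ha p, h => by
      simp [wres, wres_edges p]

lemma wres_isCycle {x : V} (p : G.Walk x x) (hc : p.IsCycle)
    (h : ∀ z ∈ p.support, z ∈ s) :
    ((wres p h).copy rfl (Subtype.ext rfl) : (G.induce s).Walk _ ⟨x, h x p.start_mem_support⟩).IsCycle := by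
  rw [SimpleGraph.Walk.isCycle_def] at hc ⊢
  obtain ⟨ht, hne, hnd⟩ := hc
  refine ⟨?_, ?_, ?_⟩
  · rw [SimpleGraph.Walk.isTrail_def] at ht ⊢
    rw [SimpleGraph.Walk.edges_copy]
    refine List.Nodup.of_map (Sym2.map Subtype.val) ?_
    rw [wres_edges p h]; exact ht
  · intro hn
    apply hne
    have h2 : ((wres p h).copy rfl (Subtype.ext rfl)).support.map Subtype.val = p.support := by
      rw [SimpleGraph.Walk.support_copy]; exact wres_support p h
    rw [hn] at h2
    simp at h2
    cases p with
    | nil => rfl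
    | cons ha q => simp [SimpleGraph.Walk.support_cons] at h2
  · refine List.Nodup.of_map Subtype.val ?_
    have h2 := congrArg List.tail
      (((wres p h).copy rfl (Subtype.ext rfl)).support_copy rfl (Subtype.ext rfl) ▸ wres_support p h :
        ((wres p h).copy rfl (Subtype.ext rfl)).support.map Subtype.val = p.support)
    rw [List.map_tail, h2]
    exact hnd


lemma parity_lemma {α : Type*} [DecidableEq α] {H : SimpleGraph α} (f : α → Bool) (e₀ : Sym2 α)
    (h1 : ∀ a b, H.Adj a b → f a ≠ f b → s(a, b) = e₀)
    (h2 : ∀ a b, s(a, b) = e₀ → f a ≠ f b) :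
    ∀ {x y : α} (p : H.Walk x y), Even (p.edges.count e₀) ↔ f x = f y := by
  intro x y p
  induction p with
  | nil => simp
  | @cons u v w ha q ih =>
    rw [SimpleGraph.Walk.edges_cons, List.count_cons]
    by_cases hc : s(u, v) = e₀
    · have hne := h2 u v hc
      simp only [hc, if_pos rfl, beq_self_eq_true, if_true]
      rw [Nat.even_add_one]
      rw [ih]
      cases hfu : f u <;> cases hfv : f v <;> cases hfy : f w <;> simp_all
    · have hfe : f u = f v := by
        by_contra hne
        exact hc (h1 u v ha hne)
      have : (if s(u,v) = e₀ then 1 else 0) = 0 := by simp [hc]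
      simp only [beq_iff_eq, hc, if_false, add_zero]
      rw [ih, hfe]



lemma const_fst {α : Type*} {H : SimpleGraph α} (f : α → Bool) :
    ∀ {x y : α} (p : H.Walk x y), (∀ e ∈ p.edges, Sym2.IsDiag (e.map f)) →
      ∀ z ∈ p.support, f z = f x := by
  intro x y p
  induction p with
  | nil => intro _ z hz; simp at hz; subst hz; rfl
  | @cons u v w ha q ih =>
    intro h z hz
    have hfe : f u = f v := by
      have := h s(u, v) (by simp)
      rwa [Sym2.map_pair_eq, Sym2.mk_isDiag_iff] at this
    rw [SimpleGraph.Walk.support_cons] at hz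
    rcases List.mem_cons.mp hz with h1 | h2
    · subst h1; rfl
    · rw [ih (fun e he => h e (by simp [he])) z h2, hfe]



lemma pull_acyclic {V W : Type*} {G : SimpleGraph V} {H : SimpleGraph W}
    (f : G →g H) (hf : Function.Injective f) (h : H.IsAcyclic) : G.IsAcyclic := by
  intro x c hc
  exact h (c.map f) (hc.map hf)

/-- Two copies of `V`, connected by a perfect matching. -/
def DG {V : Type*} (G : SimpleGraph V) : SimpleGraph (Bool × V) where
  Adj p q := (p.1 = q.1 ∧ G.Adj p.2 q.2) ∨ (p.1 ≠ q.1 ∧ p.2 = q.2)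
  symm := by
    constructor
    rintro p q (⟨h1, h2⟩ | ⟨h1, h2⟩)
    · exact Or.inl ⟨h1.symm, h2.symm⟩
    · exact Or.inr ⟨h1.symm, h2.symm⟩
  loopless := by constructor; rintro p (⟨_, h⟩ | ⟨h, _⟩) <;> simp_all

def SS {V : Type*} (A B : Set V) : Set (Bool × V) :=
  {p | (p.1 = false ∧ p.2 ∈ A) ∨ (p.1 = true ∧ p.2 ∈ B)}

lemma DG_induce_adj {V : Type*} {G : SimpleGraph V} {A B : Set V}
    {z w : ↥(SS A B)} (h : ((DG G).induce (SS A B)).Adj z w) :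
    (z.1.1 = w.1.1 ∧ G.Adj z.1.2 w.1.2) ∨ (z.1.1 ≠ w.1.1 ∧ z.1.2 = w.1.2) := by
  simpa [DG] using h

lemma copy_acyclic {V : Type*} (G : SimpleGraph V) (A B : Set V)
    (hA : (G.induce A).IsAcyclic) (hB : (G.induce B).IsAcyclic) (b : Bool) :
    (((DG G).induce (SS A B)).induce {z : ↥(SS A B) | z.1.1 = b}).IsAcyclic := by
  have memlem : ∀ z : ↥{z : ↥(SS A B) | z.1.1 = b}, z.1.1.2 ∈ (bif b then B else A) := by
    intro z
    have hb : z.1.1.1 = b := z.2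
    rcases z.1.2 with ⟨h1, h2⟩ | ⟨h1, h2⟩
    · rw [h1] at hb; subst hb; simpa using h2
    · rw [h1] at hb; subst hb; simpa using h2
  have hom : ∀ z w : ↥{z : ↥(SS A B) | z.1.1 = b},
      (((DG G).induce (SS A B)).induce {z : ↥(SS A B) | z.1.1 = b}).Adj z w →
      G.Adj z.1.1.2 w.1.1.2 := by
    intro z w h
    have h' : ((DG G).induce (SS A B)).Adj z.1 w.1 := h
    rcases DG_induce_adj h' with ⟨_, h2⟩ | ⟨h1, _⟩
    · exact h2
    · exact absurd (z.2.trans w.2.symm) h1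
  have inj : ∀ z w : ↥{z : ↥(SS A B) | z.1.1 = b}, z.1.1.2 = w.1.1.2 → z = w := by
    intro z w h
    exact Subtype.ext (Subtype.ext (Prod.ext (z.2.trans w.2.symm) h))
  cases b
  · refine pull_acyclic ⟨fun z => ⟨z.1.1.2, by simpa using memlem z⟩, ?_⟩ ?_ hA
    · intro z w h; exact hom z w h
    · intro z w h; exact inj z w (congrArg Subtype.val h)
  · refine pull_acyclic ⟨fun z => ⟨z.1.1.2, by simpa using memlem z⟩, ?_⟩ ?_ hB
    · intro z w h; exact hom z w h
    · intro z w h; exact inj z w (congrArg Subtype.val h)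


lemma L2 {V : Type*} (G : SimpleGraph V) (A B : Set V) (v₀ : V)
    (hA : (G.induce A).IsAcyclic) (hB : (G.induce B).IsAcyclic)
    (hAB : ∀ u, u ∈ A → u ∈ B → u = v₀) :
    ((DG G).induce (SS A B)).IsAcyclic := by
  intro x c hc
  haveI : DecidableEq ↥(SS A B) := Classical.decEq _
  set fb : ↥(SS A B) → Bool := fun z => z.1.1 with hfb
  have hcrossv : ∀ z w : ↥(SS A B), ((DG G).induce (SS A B)).Adj z w → fb z ≠ fb w →
      z.1.2 = v₀ ∧ w.1.2 = v₀ ∧ v₀ ∈ A ∧ v₀ ∈ B := by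
    intro z w h hne
    rcases DG_induce_adj h with ⟨h1, _⟩ | ⟨_, h2⟩
    · exact absurd h1 hne
    · have hzw : z.1.1 ≠ w.1.1 := hne
      -- one of z, w has fst false, the other true
      have hmem : z.1.2 ∈ A ∧ w.1.2 ∈ B ∨ z.1.2 ∈ B ∧ w.1.2 ∈ A := by
        rcases z.2 with ⟨hz1, hz2⟩ | ⟨hz1, hz2⟩ <;> rcases w.2 with ⟨hw1, hw2⟩ | ⟨hw1, hw2⟩
        · exact absurd (hz1.trans hw1.symm) hzw
        · exact Or.inl ⟨hz2, hw2⟩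
        · exact Or.inr ⟨hz2, hw2⟩
        · exact absurd (hz1.trans hw1.symm) hzw
      rcases hmem with ⟨hz2, hw2⟩ | ⟨hz2, hw2⟩
      · have := hAB z.1.2 hz2 (h2 ▸ hw2)
        exact ⟨this, h2 ▸ this, this ▸ hz2, this ▸ (show z.1.2 ∈ B from h2 ▸ hw2)⟩
      · have := hAB z.1.2 (h2 ▸ hw2) hz2
        exact ⟨this, h2 ▸ this, this ▸ (show z.1.2 ∈ A from h2 ▸ hw2), this ▸ hz2⟩
  by_cases hex : ∀ e ∈ c.edges, Sym2.IsDiag (e.map fb)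
  · -- no cross edge: the cycle stays in one copy
    have hsupp : ∀ z ∈ c.support, z ∈ {z : ↥(SS A B) | z.1.1 = x.1.1} := by
      intro z hz
      exact const_fst fb c hex z hz
    exact copy_acyclic G A B hA hB x.1.1 _ (wres_isCycle c hc hsupp)
  · push_neg at hex
    obtain ⟨e, he, hcr⟩ := hex
    revert he hcr
    induction e using Sym2.ind with | _ z w => ?_
    intro he hcr
    have hadjzw : ((DG G).induce (SS A B)).Adj z w := c.edges_subset_edgeSet he
    have hne : fb z ≠ fb w := by
      rw [Sym2.map_pair_eq, Sym2.mk_isDiag_iff] at hcr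
      exact hcr
    obtain ⟨hz0, hw0, hvA, hvB⟩ := hcrossv z w hadjzw hne
    set zf : ↥(SS A B) := ⟨(false, v₀), Or.inl ⟨rfl, hvA⟩⟩ with hzf
    set zt : ↥(SS A B) := ⟨(true, v₀), Or.inr ⟨rfl, hvB⟩⟩ with hzt
    set e₀ : Sym2 ↥(SS A B) := s(zf, zt) with he₀def
    have hcanon : ∀ a : ↥(SS A B), a.1.2 = v₀ → (a = zf ∨ a = zt) := by
      intro a ha
      cases hfa : a.1.1
      · exact Or.inl (Subtype.ext (Prod.ext hfa ha))
      · exact Or.inr (Subtype.ext (Prod.ext hfa ha))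
    have hall : ∀ a b : ↥(SS A B), ((DG G).induce (SS A B)).Adj a b → fb a ≠ fb b →
        s(a, b) = e₀ := by
      intro a b hab hne'
      obtain ⟨ha0, hb0, _, _⟩ := hcrossv a b hab hne'
      rcases hcanon a ha0 with h1 | h1 <;> rcases hcanon b hb0 with h2 | h2
      · exact absurd (h1 ▸ h2 ▸ rfl) hne'
      · rw [h1, h2]
      · rw [h1, h2]; exact Sym2.eq_swap
      · exact absurd (h1 ▸ h2 ▸ rfl) hne'
    have h2 : ∀ a b : ↥(SS A B), s(a, b) = e₀ → fb a ≠ fb b := by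
      intro a b hab
      rw [he₀def, Sym2.eq_iff] at hab
      rcases hab with ⟨h1, h2⟩ | ⟨h1, h2⟩ <;> subst h1 <;> subst h2 <;> simp [hfb, hzf, hzt]
    have hpar := (parity_lemma fb e₀ hall h2 c).mpr rfl
    have hee : e₀ ∈ c.edges := hall z w hadjzw hne ▸ he
    have hcount : c.edges.count e₀ ≤ 1 :=
      List.nodup_iff_count_le_one.mp hc.edges_nodup e₀
    have hpos : 0 < c.edges.count e₀ := List.count_pos_iff.mpr hee
    have hone : c.edges.count e₀ = 1 := le_antisymm hcount hpos
    rw [hone] at hpar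
    exact (Nat.not_even_one) hpar


def IsTournament' {V : Type*} (r : V → V → Prop) : Prop :=
  (∀ v, ¬ r v v) ∧ ∀ u v : V, u ≠ v → (r u v ↔ ¬ r v u)


lemma DG_degree {V : Type*} [Fintype V] (G : SimpleGraph V) (p : Bool × V) :
    (DG G).degree p = G.degree p.2 + 1 := by
  have h : (DG G).neighborFinset p =
      insert (!p.1, p.2) ((G.neighborFinset p.2).map
        ⟨fun u => (p.1, u), fun a b hab => by simpa using hab⟩) := by
    ext q
    simp only [SimpleGraph.mem_neighborFinset, Finset.mem_insert, Finset.mem_map,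
      Function.Embedding.coeFn_mk]
    constructor
    · rintro (⟨h1, h2⟩ | ⟨h1, h2⟩)
      · exact Or.inr ⟨q.2, by simpa using h2, Prod.ext h1 rfl⟩
      · refine Or.inl ?_
        have : q.1 = !p.1 := by
          cases hp : p.1 <;> cases hq : q.1 <;> simp_all
        exact Prod.ext this h2.symm
    · rintro (h | ⟨u, hu, hq⟩)
      · subst h
        exact Or.inr ⟨by simp, rfl⟩
      · subst hq
        exact Or.inl ⟨rfl, hu⟩
  rw [SimpleGraph.degree, h, Finset.card_insert_of_notMem, Finset.card_map]
  · rfl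
  · intro hmem
    rcases Finset.mem_map.mp hmem with ⟨u, _, hq⟩
    have := congrArg Prod.fst hq
    have h3 : p.1 = !p.1 := this
    simp at h3

def rstep {V : Type*} (r : V → V → Prop) (p q : Bool × V) : Prop :=
  if p.1 = q.1 then r p.2 q.2
  else if p.1 = false then (p.2 = q.2 ∨ ¬ r p.2 q.2)
  else ¬ (q.2 = p.2 ∨ ¬ r q.2 p.2)

lemma rstep_tournament {V : Type*} {r : V → V → Prop} (h : IsTournament' r) :
    IsTournament' (rstep r) := by
  obtain ⟨hirr, hex⟩ := h
  constructor
  · intro p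
    simp [rstep, hirr p.2]
  · rintro ⟨a, u⟩ ⟨b, v⟩ hne
    by_cases hab : a = b
    · subst hab
      have huv : u ≠ v := fun h => hne (by rw [h])
      simp only [rstep, if_pos rfl]
      exact hex u v huv
    · cases ha : a <;> cases hb : b <;> (try (exfalso; exact hab (ha.trans hb.symm)))
      · simp [rstep, ha, hb]; try tauto
      · simp [rstep, ha, hb]; try tauto


lemma mono_acyclic {V : Type*} {G : SimpleGraph V} {s t : Set V} (hst : s ⊆ t)
    (h : (G.induce t).IsAcyclic) : (G.induce s).IsAcyclic := by
  refine pull_acyclic ⟨fun z => ⟨z.1, hst z.2⟩, ?_⟩ ?_ h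
  · intro a b hab; simpa using hab
  · intro a b hab; simpa [Subtype.ext_iff] using hab

lemma acyclic_congr {V : Type*} {G : SimpleGraph V} {s t : Set V} (h : s = t)
    (ht : (G.induce t).IsAcyclic) : (G.induce s).IsAcyclic := h ▸ ht

def Good (k : ℕ) {V : Type} [Fintype V] (G : SimpleGraph V) (r : V → V → Prop) : Prop :=
  IsTournament' r ∧ G.IsRegularOfDegree k ∧
  (∀ v, (G.induce {u | r v u ∨ u = v}).IsAcyclic) ∧
  (∀ v, (G.induce {u | r u v ∨ u = v}).IsAcyclic)

lemma step {V : Type} [Fintype V] {G : SimpleGraph V} {r : V → V → Prop} {k : ℕ}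
    (hG : Good k G r) : Good (k + 1) (DG G) (rstep r) := by
  obtain ⟨ht, hreg, hout, hin⟩ := hG
  have hiff : ∀ u w : V, u ≠ w → (r u w ↔ ¬ r w u) := ht.2
  refine ⟨rstep_tournament ht, ?_, ?_, ?_⟩
  · intro p
    rw [DG_degree, hreg p.2]
  · rintro ⟨a, v⟩
    cases a
    · -- out-neighbourhood (with self) of (false, v)
      have hAB : ∀ u, u ∈ {u | r v u ∨ u = v} → u ∈ {u | r u v ∨ u = v} → u = v := by
        intro u h1 h2
        by_contra huv
        rcases h1 with h1 | h1; swap; · exact huv h1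
        rcases h2 with h2 | h2; swap; · exact huv h2
        exact ((hiff u v huv).mp h2) h1
      refine acyclic_congr ?_ (L2 G {u | r v u ∨ u = v} {u | r u v ∨ u = v} v
        (hout v) (hin v) hAB)
      ext ⟨b, u⟩
      by_cases huv : u = v
      · subst huv
        cases b <;> simp [SS, rstep, ht.1 u]
      · cases b <;>
          simp [SS, rstep, huv, Prod.ext_iff, hiff u v huv, eq_comm (a := u) (b := v)] <;>
          tauto
    ·
      have hB : (G.induce {u : V | r u v ∧ u ≠ v}).IsAcyclic :=
        mono_acyclic (fun u hu => Or.inl hu.1) (hin v)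
      have hAB : ∀ u, u ∈ {u : V | r u v ∧ u ≠ v} → u ∈ {u | r v u ∨ u = v} → u = v := by
        intro u h1 h2
        rcases h2 with h2 | h2; swap; · exact h2
        exact absurd h2 ((hiff u v h1.2).mp h1.1)
      refine acyclic_congr ?_ (L2 G {u : V | r u v ∧ u ≠ v} {u | r v u ∨ u = v} v
        hB (hout v) hAB)
      ext ⟨b, u⟩
      by_cases huv : u = v
      · subst huv
        cases b <;> simp [SS, rstep, ht.1 u]
      · cases b <;>
          simp [SS, rstep, huv, Prod.ext_iff, hiff u v huv, eq_comm (a := u) (b := v)] <;>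
          tauto
  · rintro ⟨a, v⟩
    cases a
    · -- in-neighbourhood (with self) of (false, v)
      have hB : (G.induce {u : V | r v u ∧ u ≠ v}).IsAcyclic :=
        mono_acyclic (fun u hu => Or.inl hu.1) (hout v)
      have hAB : ∀ u, u ∈ {u | r u v ∨ u = v} → u ∈ {u : V | r v u ∧ u ≠ v} → u = v := by
        intro u h1 h2
        rcases h1 with h1 | h1; swap; · exact h1
        exact absurd h2.1 ((hiff u v h2.2).mp h1)
      refine acyclic_congr ?_ (L2 G {u | r u v ∨ u = v} {u : V | r v u ∧ u ≠ v} v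
        (hin v) hB hAB)
      ext ⟨b, u⟩
      by_cases huv : u = v
      · subst huv
        cases b <;> simp [SS, rstep, ht.1 u]
      · cases b <;>
          simp [SS, rstep, huv, Prod.ext_iff, hiff u v huv, eq_comm (a := u) (b := v)] <;>
          tauto
    · -- in-neighbourhood (with self) of (true, v)
      have hAB : ∀ u, u ∈ {u | r v u ∨ u = v} → u ∈ {u | r u v ∨ u = v} → u = v := by
        intro u h1 h2
        by_contra huv
        rcases h1 with h1 | h1; swap; · exact huv h1
        rcases h2 with h2 | h2; swap; · exact huv h2
        exact ((hiff u v huv).mp h2) h1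
      refine acyclic_congr ?_ (L2 G {u | r v u ∨ u = v} {u | r u v ∨ u = v} v
        (hout v) (hin v) hAB)
      ext ⟨b, u⟩
      by_cases huv : u = v
      · subst huv
        cases b <;> simp [SS, rstep, ht.1 u]
      · cases b <;>
          simp [SS, rstep, huv, Prod.ext_iff, hiff u v huv, eq_comm (a := u) (b := v)] <;>
          tauto

lemma small_acyclic {W : Type*} [Fintype W] (hW : Fintype.card W ≤ 2) (H : SimpleGraph W) :
    H.IsAcyclic := by
  intro x c hc
  have h3 := hc.three_le_length
  have hnd : c.support.tail.Nodup := hc.2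
  have h1 := hnd.length_le_card
  have h2 : c.support.tail.length = c.length := by
    simp [SimpleGraph.Walk.length_support]
  omega

lemma base_good : Good 1 (⊤ : SimpleGraph Bool) (fun a b => a = false ∧ b = true) := by
  have hac : ∀ s : Set Bool, ((⊤ : SimpleGraph Bool).induce s).IsAcyclic := by
    intro s
    refine small_acyclic ?_ _
    calc Fintype.card ↥s ≤ Fintype.card Bool :=
          Fintype.card_le_of_injective Subtype.val Subtype.val_injective
      _ = 2 := by simp
  refine ⟨⟨?_, ?_⟩, ?_, fun _ => hac _, fun _ => hac _⟩
  · intro v hv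
    rw [hv.1] at hv
    exact Bool.false_ne_true hv.2
  · intro u v huv
    cases u <;> cases v <;> simp_all
  · intro v
    have h1 : Fintype.card ((⊤ : SimpleGraph Bool).neighborSet v) = 1 := by
      rw [Fintype.card_eq_one_iff]
      refine ⟨⟨!v, by cases v <;> simp⟩, ?_⟩
      rintro ⟨u, hu⟩
      have h2 : v ≠ u := SimpleGraph.Adj.ne (show (⊤ : SimpleGraph Bool).Adj v u from hu)
      exact Subtype.ext (by cases v <;> cases u <;> simp_all)
    convert (SimpleGraph.card_neighborSet_eq_degree ⊤ v).symm.trans h1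

lemma exists_good : ∀ k : ℕ, 1 ≤ k →
    ∃ (V : Type) (inst : Fintype V) (G : SimpleGraph V) (r : V → V → Prop),
      @Good k V inst G r := by
  intro k hk
  induction k with
  | zero => omega
  | succ n ih =>
    rcases Nat.lt_or_ge n 1 with hn | hn
    · interval_cases n
      exact ⟨Bool, inferInstance, _, _, base_good⟩
    · obtain ⟨V, iV, G, r, hg⟩ := ih hn
      exact ⟨Bool × V, @instFintypeProd _ _ _ iV, DG G, rstep r, @step V iV G r n hg⟩

end MyProof

/-- A tournament on `V`: an orientation of the complete graph, i.e. an irreflexive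
relation such that for distinct vertices exactly one direction is present. -/
def IsTournament {V : Type*} (r : V → V → Prop) : Prop :=
  (∀ v, ¬ r v v) ∧ ∀ u v : V, u ≠ v → (r u v ↔ ¬ r v u)

/-- For every positive integer k there exist a k-regular graph G and a
tournament T on the same finite vertex set such that for every vertex v the subgraph
of G induced on the out-neighbourhood N⁺_T(v) is a forest. -/
theorem stmt_3 (k : ℕ) (hk : 1 ≤ k) :
    ∃ (n : ℕ) (G : SimpleGraph (Fin n)) (r : Fin n → Fin n → Prop),
      IsTournament r ∧
      G.IsRegularOfDegree k ∧
      ∀ v : Fin n, (G.induce {u | r v u}).IsAcyclic := by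
  obtain ⟨V, iV, G, r, hg⟩ := MyProof.exists_good k hk
  haveI := iV
  obtain ⟨htour, hreg, hout, _⟩ := hg
  let e : Fin (Fintype.card V) ≃ V := (Fintype.equivFin V).symm
  refine ⟨Fintype.card V, G.comap e, fun x y => r (e x) (e y), ⟨?_, ?_⟩, ?_, ?_⟩
  · intro v
    exact htour.1 (e v)
  · intro u v huv
    exact htour.2 (e u) (e v) (fun h => huv (e.injective h))
  · intro x
    have hdeg : (G.comap e).degree x = G.degree (e x) := by
      rw [← SimpleGraph.card_neighborSet_eq_degree, ← SimpleGraph.card_neighborSet_eq_degree]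
      apply Fintype.card_congr
      exact Equiv.subtypeEquiv e (fun a => by simp [SimpleGraph.mem_neighborSet])
    rw [← hreg (e x)]
    convert hdeg
  · intro v
    have h1 : (G.induce {u | r (e v) u}).IsAcyclic :=
      MyProof.mono_acyclic (fun u hu => Or.inl hu) (hout (e v))
    refine MyProof.pull_acyclic ⟨fun z => ⟨e z.1, z.2⟩, ?_⟩ ?_ h1
    · intro a b hab
      simpa using hab
    · intro a b hab
      simp only [Subtype.mk.injEq] at hab
      exact Subtype.ext (e.injective (congrArg Subtype.val hab))
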